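/- For any permutation σ ∈ S_{2m}, each connected component of the graph Γ(σ) contains an even number of edges, and hence the half-lengths of the connected components, arranged in decreasing order, form an integer partition of m (the coset-type of σ). -/

import Mathlib

open scoped BigOperators

/-- The first member of the `k`-th pair (0-indexed: `2k`). -/
def pairFst (m : ℕ) (k : Fin m) : Fin (2 * m) :=
  ⟨2 * k.val, by have := k.isLt; omega⟩

/-- The second member of the `k`-th pair (0-indexed: `2k+1`). -/
def pairSnd (m : ℕ) (k : Fin m) : Fin (2 * m) :=
  ⟨2 * k.val + 1, by have := k.isLt; omega⟩

/-- The graph `Γ(σ)` on vertices `{1, …, 2m}` with edges `(2k-1, 2k)` and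
`(σ(2k-1), σ(2k))` for `k = 1, …, m`. -/
def permGraph (m : ℕ) (σ : Equiv.Perm (Fin (2 * m))) : SimpleGraph (Fin (2 * m)) :=
  SimpleGraph.fromRel fun i j =>
    (∃ k, i = pairFst m k ∧ j = pairSnd m k) ∨
    (∃ k, i = σ (pairFst m k) ∧ j = σ (pairSnd m k))

/-- An endpoint of each of the `2m` edges of `Γ(σ)` (the edges are indexed by
`Fin m ⊕ Fin m`: black pair-edges and red `σ`-edges). -/
def edgeEnd (m : ℕ) (σ : Equiv.Perm (Fin (2 * m))) : Fin m ⊕ Fin m → Fin (2 * m) :=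
  Sum.elim (fun k => pairFst m k) (fun k => σ (pairFst m k))

namespace PGaux

variable {m : ℕ} (σ : Equiv.Perm (Fin (2 * m)))

def pairIdx (v : Fin (2 * m)) : Fin m := ⟨v.val / 2, by have := v.isLt; omega⟩

lemma fst_or_snd (v : Fin (2 * m)) :
    v = pairFst m (pairIdx v) ∨ v = pairSnd m (pairIdx v) := by
  have hlt := v.isLt
  rcases Nat.even_or_odd v.val with h | h
  · rw [Nat.even_iff] at h
    left; apply Fin.ext; simp only [pairFst, pairIdx]; omega
  · rw [Nat.odd_iff] at h
    right; apply Fin.ext; simp only [pairSnd, pairIdx]; omega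

lemma comp_pair (k : Fin m) :
    (permGraph m σ).connectedComponentMk (pairFst m k) =
      (permGraph m σ).connectedComponentMk (pairSnd m k) := by
  apply SimpleGraph.ConnectedComponent.sound
  apply SimpleGraph.Adj.reachable
  rw [permGraph, SimpleGraph.fromRel_adj]
  refine ⟨?_, Or.inl (Or.inl ⟨k, rfl, rfl⟩)⟩
  simp [pairFst, pairSnd, Fin.ext_iff]

lemma comp_pair_sigma (k : Fin m) :
    (permGraph m σ).connectedComponentMk (σ (pairFst m k)) =
      (permGraph m σ).connectedComponentMk (σ (pairSnd m k)) := by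
  apply SimpleGraph.ConnectedComponent.sound
  apply SimpleGraph.Adj.reachable
  rw [permGraph, SimpleGraph.fromRel_adj]
  refine ⟨?_, Or.inl (Or.inr ⟨k, rfl, rfl⟩)⟩
  intro h
  have := σ.injective h
  rw [Fin.ext_iff] at this
  simp [pairFst, pairSnd] at this

/-- general half-counting equivalence -/
noncomputable def halfEquiv (e : Equiv.Perm (Fin (2 * m)))
    (he : ∀ k : Fin m, (permGraph m σ).connectedComponentMk (e (pairFst m k)) =
        (permGraph m σ).connectedComponentMk (e (pairSnd m k)))
    (c : (permGraph m σ).ConnectedComponent) :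
    {v : Fin (2 * m) // (permGraph m σ).connectedComponentMk v = c} ≃
      {k : Fin m // (permGraph m σ).connectedComponentMk (e (pairFst m k)) = c} × Bool where
  toFun v := ⟨⟨pairIdx (e.symm v.1), by
      rcases fst_or_snd (e.symm v.1) with h | h
      · rw [← h, Equiv.apply_symm_apply]; exact v.2
      · rw [he, ← h, Equiv.apply_symm_apply]; exact v.2⟩,
    decide ((e.symm v.1).val % 2 = 1)⟩
  invFun kb := ⟨e (if kb.2 then pairSnd m kb.1.1 else pairFst m kb.1.1), by
      cases hb : kb.2 <;> simp only [hb, if_true, if_false, Bool.false_eq_true]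
      · exact kb.1.2
      · rw [← he]; exact kb.1.2⟩
  left_inv := by
    rintro ⟨v, hv⟩
    apply Subtype.ext
    have hlt := (e.symm v).isLt
    by_cases h : (e.symm v).val % 2 = 1 <;>
      simp only [h, decide_eq_true_eq, decide_eq_false_iff_not] <;>
      · show e _ = v
        conv_rhs => rw [← Equiv.apply_symm_apply e v]
        congr 1
        first
        | rw [if_pos (by simp [h])]
        | rw [if_neg (by simp [h])]
        all_goals (apply Fin.ext; simp only [pairFst, pairSnd, pairIdx]; omega)
  right_inv := by
    rintro ⟨⟨k, hk⟩, b⟩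
    have hk2 := k.isLt
    cases b <;>
    · simp only [if_true, if_false, Bool.false_eq_true, Equiv.symm_apply_apply]
      refine Prod.ext (Subtype.ext (Fin.ext ?_)) ?_
      · simp only [pairIdx, pairFst, pairSnd]; omega
      · simp only [pairFst, pairSnd]
        first
        | (exact decide_eq_false (by omega))
        | (exact decide_eq_true (by omega))

lemma card_half (e : Equiv.Perm (Fin (2 * m)))
    (he : ∀ k : Fin m, (permGraph m σ).connectedComponentMk (e (pairFst m k)) =
        (permGraph m σ).connectedComponentMk (e (pairSnd m k)))
    (c : (permGraph m σ).ConnectedComponent) :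
    Nat.card {v : Fin (2 * m) // (permGraph m σ).connectedComponentMk v = c} =
      2 * Nat.card {k : Fin m // (permGraph m σ).connectedComponentMk (e (pairFst m k)) = c} := by
  rw [Nat.card_congr (halfEquiv σ e he c), Nat.card_prod]
  simp [Nat.card_eq_fintype_card, mul_comm]

end PGaux

/-- Every connected component of `Γ(σ)` contains an even number of the `2m` edges
(counted with multiplicity), and hence the half-lengths of the components sum to `m`,
forming an integer partition of `m` (the coset-type of `σ`). -/
theorem permGraph_components_even_edges (m : ℕ) (σ : Equiv.Perm (Fin (2 * m))) :
    (∀ c : (permGraph m σ).ConnectedComponent,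
        Even (Nat.card {k : Fin m ⊕ Fin m //
          (permGraph m σ).connectedComponentMk (edgeEnd m σ k) = c})) ∧
      ∑ᶠ c : (permGraph m σ).ConnectedComponent,
        (Nat.card {k : Fin m ⊕ Fin m //
          (permGraph m σ).connectedComponentMk (edgeEnd m σ k) = c}) / 2 = m := by
  classical
  have hsplit : ∀ c : (permGraph m σ).ConnectedComponent,
      Nat.card {k : Fin m ⊕ Fin m // (permGraph m σ).connectedComponentMk (edgeEnd m σ k) = c} =
        Nat.card {k : Fin m // (permGraph m σ).connectedComponentMk (pairFst m k) = c} +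
        Nat.card {k : Fin m // (permGraph m σ).connectedComponentMk (σ (pairFst m k)) = c} := by
    intro c
    rw [Nat.card_congr (Equiv.subtypeSum
      (p := fun k => (permGraph m σ).connectedComponentMk (edgeEnd m σ k) = c)), Nat.card_sum]
    rfl
  have hBR : ∀ c : (permGraph m σ).ConnectedComponent,
      Nat.card {k : Fin m // (permGraph m σ).connectedComponentMk (pairFst m k) = c} =
        Nat.card {k : Fin m // (permGraph m σ).connectedComponentMk (σ (pairFst m k)) = c} := by
    intro c
    have h1 := PGaux.card_half σ (Equiv.refl _)
      (fun k => PGaux.comp_pair σ k) c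
    have h2 := PGaux.card_half σ σ (fun k => PGaux.comp_pair_sigma σ k) c
    simp only [Equiv.refl_apply] at h1
    omega
  constructor
  · intro c
    rw [hsplit c, ← hBR c]
    exact ⟨_, rfl⟩
  · have hhalf : ∀ c : (permGraph m σ).ConnectedComponent,
        (Nat.card {k : Fin m ⊕ Fin m //
            (permGraph m σ).connectedComponentMk (edgeEnd m σ k) = c}) / 2 =
          Nat.card {k : Fin m // (permGraph m σ).connectedComponentMk (pairFst m k) = c} := by
      intro c; rw [hsplit c, ← hBR c]; omega
    have : Fintype (permGraph m σ).ConnectedComponent := Fintype.ofFinite _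
    rw [finsum_eq_sum_of_fintype]
    calc ∑ c : (permGraph m σ).ConnectedComponent,
          (Nat.card {k : Fin m ⊕ Fin m //
            (permGraph m σ).connectedComponentMk (edgeEnd m σ k) = c}) / 2
        = ∑ c : (permGraph m σ).ConnectedComponent,
          Nat.card {k : Fin m // (permGraph m σ).connectedComponentMk (pairFst m k) = c} :=
          Finset.sum_congr rfl fun c _ => hhalf c
      _ = ∑ c : (permGraph m σ).ConnectedComponent,
          (Finset.univ.filter fun k : Fin m =>
            (permGraph m σ).connectedComponentMk (pairFst m k) = c).card := by
          refine Finset.sum_congr rfl fun c _ => ?_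
          rw [Nat.card_eq_fintype_card, Fintype.card_subtype]
      _ = (Finset.univ : Finset (Fin m)).card :=
          (Finset.card_eq_sum_card_fiberwise fun k _ => Finset.mem_univ _).symm
      _ = m := by simp
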